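/- The one-soliton function ω(ξ,η) = 2 arctan(exp(λξ + η/λ)) satisfies the sine-Gordon equation ω_{ξη} = (1/2) sin(2ω) for any nonzero real constant λ. -/

import Mathlib

open Real

lemma inner_deriv (lam b ξ : ℝ) :
    deriv (fun a : ℝ => 2 * arctan (exp (lam * a + b / lam))) ξ
      = 2 * lam * exp (lam * ξ + b / lam) / (1 + exp (lam * ξ + b / lam) ^ 2) := by
  have h1 : HasDerivAt (fun a : ℝ => lam * a + b / lam) lam ξ := by
    simpa using ((hasDerivAt_id ξ).const_mul lam).add_const (b / lam)
  have h2 := h1.exp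
  have h3 := (Real.hasDerivAt_arctan (exp (lam * ξ + b / lam))).comp ξ h2
  have h4 : HasDerivAt (fun a : ℝ => 2 * arctan (exp (lam * a + b / lam)))
      (2 * (1 / (1 + exp (lam * ξ + b / lam) ^ 2) * (exp (lam * ξ + b / lam) * lam))) ξ :=
    h3.const_mul 2
  rw [h4.deriv]
  field_simp

/-- The one-soliton function `ω(ξ,η) = 2 arctan(exp(λξ + η/λ))` satisfies the sine-Gordon
equation `ω_{ξη} = (1/2) sin 2ω` for every nonzero `λ`. -/
theorem stmt_13 (lam : ℝ) (hlam : lam ≠ 0) (ξ η : ℝ) :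
    deriv (fun b : ℝ =>
        deriv (fun a : ℝ => 2 * arctan (exp (lam * a + b / lam))) ξ) η
      = (1 / 2) * sin (2 * (2 * arctan (exp (lam * ξ + η / lam)))) := by
  have hfun : (fun b : ℝ =>
      deriv (fun a : ℝ => 2 * arctan (exp (lam * a + b / lam))) ξ)
      = fun b : ℝ =>
        2 * lam * exp (lam * ξ + b / lam) / (1 + exp (lam * ξ + b / lam) ^ 2) :=
    funext fun b => inner_deriv lam b ξ
  rw [hfun]
  set t := exp (lam * ξ + η / lam) with ht
  have htpos : 0 < t := exp_pos _
  have hden : (1 : ℝ) + t ^ 2 ≠ 0 := by positivity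
  -- derivative of outer function
  have hp : HasDerivAt (fun b : ℝ => lam * ξ + b / lam) (1 / lam) η := by
    simpa using ((hasDerivAt_id η).div_const lam).const_add (lam * ξ)
  have he : HasDerivAt (fun b : ℝ => exp (lam * ξ + b / lam)) (t * (1 / lam)) η := by
    simpa [ht] using hp.exp
  have hN : HasDerivAt (fun b : ℝ => 2 * lam * exp (lam * ξ + b / lam))
      (2 * lam * (t * (1 / lam))) η := he.const_mul _
  have hD : HasDerivAt (fun b : ℝ => 1 + exp (lam * ξ + b / lam) ^ 2)
      (2 * t * (t * (1 / lam))) η := by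
    have := (he.pow 2).const_add 1
    simpa [ht, mul_comm, mul_assoc, mul_left_comm] using this
  have hq : HasDerivAt (fun b : ℝ => 2 * lam * exp (lam * ξ + b / lam) / (1 + exp (lam * ξ + b / lam) ^ 2)) _ η :=
    hN.div hD hden
  rw [hq.deriv, ← ht]
  -- RHS trig computation
  have hs2 : Real.sqrt (1 + t ^ 2) ^ 2 = 1 + t ^ 2 := Real.sq_sqrt (by positivity)
  have hsne : Real.sqrt (1 + t ^ 2) ≠ 0 := by positivity
  rw [sin_two_mul, sin_two_mul, cos_two_mul, sin_arctan, cos_arctan]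
  field_simp [hlam]
  ring_nf
  have h4 : Real.sqrt (1 + t ^ 2) ^ 4 = (1 + t ^ 2) ^ 2 := by rw [show (4:ℕ) = 2 * 2 from rfl, pow_mul, hs2]
  rw [h4, hs2]
  ring
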